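/- Let κ = 1 + √2 and ω ∈ ℝ. Suppose (θ0, θ1, θ2, θ3, ζ) ∈ ℝ⁵ is an equilibrium of the minimal frequency-spiral model with parameter ω such that cos θ_i > 0 for every i ∈ {0, 1, 2, 3}. Then ω·√(2/κ) = sin ζ/(√2 + cos ζ)^{1/2} − cos ζ/(√2 + sin ζ)^{1/2} − sin ζ/(√2 − cos ζ)^{1/2} + cos ζ/(√2 − sin ζ)^{1/2}. -/

import Mathlib

open Real

/-- An equilibrium of the minimal frequency-spiral model with parameter `ω` and
`κ = 1 + √2`: all five right-hand sides of the ODE system vanish. -/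
def IsMinimalSpiralEquilibrium (ω θ0 θ1 θ2 θ3 ζ : ℝ) : Prop :=
  Real.sin (ζ - θ0) - (1 + Real.sqrt 2) * Real.sin θ0 = 0 ∧
  Real.sin (ζ - θ1 - Real.pi / 2) - (1 + Real.sqrt 2) * Real.sin θ1 = 0 ∧
  Real.sin (ζ - θ2 - Real.pi) - (1 + Real.sqrt 2) * Real.sin θ2 = 0 ∧
  Real.sin (ζ - θ3 - 3 * Real.pi / 2) - (1 + Real.sqrt 2) * Real.sin θ3 = 0 ∧
  ω - Real.sin (ζ - θ0) - Real.sin (ζ - θ1 - Real.pi / 2)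
    - Real.sin (ζ - θ2 - Real.pi) - Real.sin (ζ - θ3 - 3 * Real.pi / 2) = 0

lemma sqrt2_gt_one : (1:ℝ) < Real.sqrt 2 := by
  have h : (1:ℝ) = Real.sqrt 1 := (Real.sqrt_one).symm
  rw [h]; exact Real.sqrt_lt_sqrt (by norm_num) (by norm_num)

lemma spiral_key (α θ : ℝ) (hθ : 0 < Real.cos θ)
    (heq : Real.sin (α - θ) = (1 + Real.sqrt 2) * Real.sin θ) :
    (1 + Real.sqrt 2) * Real.sin θ * Real.sqrt (2 / (1 + Real.sqrt 2)) =
      Real.sin α / Real.sqrt (Real.sqrt 2 + Real.cos α) := by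
  set s2 := Real.sqrt 2 with hs2def
  have hs2 : s2 ^ 2 = 2 := Real.sq_sqrt (by norm_num)
  have hs2gt : (1:ℝ) < s2 := sqrt2_gt_one
  set κ := 1 + s2 with hκdef
  have hκpos : 0 < κ := by positivity
  have hc1 : -1 ≤ Real.cos α := Real.neg_one_le_cos α
  have hs1 : -1 ≤ Real.sin α := Real.neg_one_le_sin α
  have hκc : 0 < κ + Real.cos α := by simp only [hκdef]; linarith
  have hscpos : 0 < s2 + Real.cos α := by linarith
  have hpyth : Real.sin α ^ 2 + Real.cos α ^ 2 = 1 := Real.sin_sq_add_cos_sq α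
  have hpythθ : Real.sin θ ^ 2 + Real.cos θ ^ 2 = 1 := Real.sin_sq_add_cos_sq θ
  -- step 1
  have h1 : Real.sin α * Real.cos θ = (κ + Real.cos α) * Real.sin θ := by
    rw [Real.sin_sub] at heq; ring_nf; ring_nf at heq; nlinarith [heq]
  set D := Real.sqrt (2 * κ * (s2 + Real.cos α)) with hDdef
  have hDpos : 0 < D := Real.sqrt_pos.mpr (by positivity)
  have hD2 : D ^ 2 = 2 * κ * (s2 + Real.cos α) := Real.sq_sqrt (by positivity)
  -- cos θ * D = κ + cos α
  have hident : 2 * κ * (s2 + Real.cos α) = (κ + Real.cos α) ^ 2 + Real.sin α ^ 2 := by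
    rw [hκdef]; nlinarith [hs2, hpyth]
  have hsq1 : (Real.sin α * Real.cos θ) ^ 2 = ((κ + Real.cos α) * Real.sin θ) ^ 2 := by rw [h1]
  have hsq : (Real.cos θ * D) ^ 2 = (κ + Real.cos α) ^ 2 := by
    linear_combination (Real.cos θ ^ 2) * hD2 + (Real.cos θ ^ 2) * hident + hsq1 +
      ((κ + Real.cos α) ^ 2) * hpythθ
  have hcosD : Real.cos θ * D = κ + Real.cos α := by
    have hfac : (Real.cos θ * D - (κ + Real.cos α)) * (Real.cos θ * D + (κ + Real.cos α)) = 0 := by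
      nlinarith [hsq]
    have hpos : 0 < Real.cos θ * D + (κ + Real.cos α) := by positivity
    rcases mul_eq_zero.mp hfac with h | h
    · linarith
    · linarith
  have hsinD : Real.sin θ * D = Real.sin α := by
    have : Real.cos θ * (Real.sin θ * D - Real.sin α) = 0 := by
      linear_combination Real.sin θ * hcosD - h1
    rcases mul_eq_zero.mp this with h | h
    · linarith
    · linarith
  -- κ * √(2/κ) = √(2κ)
  have hkk : κ * Real.sqrt (2 / κ) = Real.sqrt (2 * κ) := by
    rw [show 2 * κ = (2 / κ) * κ ^ 2 by field_simp,
      Real.sqrt_mul (by positivity), Real.sqrt_sq hκpos.le]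
    ring
  have hDsplit : D = Real.sqrt (2 * κ) * Real.sqrt (s2 + Real.cos α) := by
    rw [hDdef, Real.sqrt_mul (by positivity)]
  rw [eq_div_iff (by positivity)]
  calc κ * Real.sin θ * Real.sqrt (2 / κ) * Real.sqrt (s2 + Real.cos α)
      = Real.sin θ * (κ * Real.sqrt (2 / κ) * Real.sqrt (s2 + Real.cos α)) := by ring
    _ = Real.sin θ * D := by rw [hkk, hDsplit]
    _ = Real.sin α := hsinD

/-- At any equilibrium of the minimal frequency-spiral model (`κ = 1 + √2`) with
`cos θ_i > 0` for every `i`, the parameter `ω` and the central phase `ζ` satisfy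
`ω·√(2/κ) = sin ζ/(√2+cos ζ)^{1/2} − cos ζ/(√2+sin ζ)^{1/2} − sin ζ/(√2−cos ζ)^{1/2}
 + cos ζ/(√2−sin ζ)^{1/2}`. -/
theorem minimalSpiral_omega_zeta_relation (ω θ0 θ1 θ2 θ3 ζ : ℝ)
    (h : IsMinimalSpiralEquilibrium ω θ0 θ1 θ2 θ3 ζ)
    (h0 : 0 < Real.cos θ0) (h1 : 0 < Real.cos θ1)
    (h2 : 0 < Real.cos θ2) (h3 : 0 < Real.cos θ3) :
    ω * Real.sqrt (2 / (1 + Real.sqrt 2)) =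
      Real.sin ζ / Real.sqrt (Real.sqrt 2 + Real.cos ζ)
        - Real.cos ζ / Real.sqrt (Real.sqrt 2 + Real.sin ζ)
        - Real.sin ζ / Real.sqrt (Real.sqrt 2 - Real.cos ζ)
        + Real.cos ζ / Real.sqrt (Real.sqrt 2 - Real.sin ζ) := by
  obtain ⟨e0, e1, e2, e3, e5⟩ := h
  have k0 := spiral_key ζ θ0 h0 (by linarith)
  have k1 := spiral_key (ζ - Real.pi / 2) θ1 h1
    (by rw [show ζ - Real.pi / 2 - θ1 = ζ - θ1 - Real.pi / 2 by ring]; linarith)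
  have k2 := spiral_key (ζ - Real.pi) θ2 h2
    (by rw [show ζ - Real.pi - θ2 = ζ - θ2 - Real.pi by ring]; linarith)
  have k3 := spiral_key (ζ - 3 * Real.pi / 2) θ3 h3
    (by rw [show ζ - 3 * Real.pi / 2 - θ3 = ζ - θ3 - 3 * Real.pi / 2 by ring]; linarith)
  rw [show ζ - 3 * Real.pi / 2 = ζ - Real.pi - Real.pi / 2 by ring] at k3
  simp only [Real.sin_sub, Real.cos_sub, Real.sin_pi, Real.cos_pi,
    Real.sin_pi_div_two, Real.cos_pi_div_two, mul_zero, mul_one, zero_mul, one_mul,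
    mul_neg_one, sub_zero, zero_sub, neg_neg, add_zero, zero_add] at k1 k2 k3
  have hω : ω = (1 + Real.sqrt 2) * Real.sin θ0 + (1 + Real.sqrt 2) * Real.sin θ1
      + (1 + Real.sqrt 2) * Real.sin θ2 + (1 + Real.sqrt 2) * Real.sin θ3 := by linarith
  rw [hω]
  rw [show Real.sqrt 2 - Real.cos ζ = Real.sqrt 2 + -Real.cos ζ by ring,
    show Real.sqrt 2 - Real.sin ζ = Real.sqrt 2 + -Real.sin ζ by ring]
  linear_combination k0 + k1 + k2 + k3
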